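/- Let X be a locally compact non-compact Hausdorff space, let H and K be Banach X-modules, let S ∈ B(H,K), and let θ : X → [1,∞) be a continuous function with θ(x) → ∞ as x → ∞ (along the filter of complements of compact sets). If there is a constant C such that ‖(ξθ)(Q) ∘ S ∘ (θ⁻¹η)(Q)‖ ≤ C·sup|ξ|·sup|η| for all ξ, η ∈ C_c(X) (i.e. θ(Q)Sθ⁻¹(Q) is a bounded operator), then S is left decay preserving. If instead there is a constant C such that ‖(ξθ⁻¹)(Q) ∘ S ∘ (θη)(Q)‖ ≤ C·sup|ξ|·sup|η| for all ξ, η ∈ C_c(X), then S is right decay preserving. -/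

import Mathlib

open ContinuousLinearMap

noncomputable section

variable {H K : Type*}

/-- `M` is the multiplier algebra of a Banach module structure on `H`: a non-degenerate
norm-closed subalgebra of `B(H)` possessing a bounded approximate unit. -/
structure IsBanachModule (H : Type*) [NormedAddCommGroup H] [NormedSpace ℂ H]
    (M : Set (H →L[ℂ] H)) : Prop where
  zero_mem : (0 : H →L[ℂ] H) ∈ M
  add_mem : ∀ {A B : H →L[ℂ] H}, A ∈ M → B ∈ M → A + B ∈ M
  smul_mem : ∀ (c : ℂ) {A : H →L[ℂ] H}, A ∈ M → c • A ∈ M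
  mul_mem : ∀ {A B : H →L[ℂ] H}, A ∈ M → B ∈ M → A.comp B ∈ M
  isClosed : IsClosed M
  nondegenerate : Dense (↑(Submodule.span ℂ {u : H | ∃ A ∈ M, ∃ v : H, u = A v}) : Set H)
  approx_unit : ∃ C : ℝ, ∀ ε > (0 : ℝ), ∀ F : Finset (H →L[ℂ] H), ↑F ⊆ M →
    ∃ J ∈ M, ‖J‖ ≤ C ∧ ∀ A ∈ F, ‖J.comp A - A‖ ≤ ε ∧ ‖A.comp J - A‖ ≤ ε

/-- A Hilbert module: a Banach module on a Hilbert space whose multiplier algebra is a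
C*-algebra of operators (i.e. is moreover closed under adjoints). -/
structure IsHilbertModule (H : Type*) [NormedAddCommGroup H] [InnerProductSpace ℂ H]
    [CompleteSpace H] (M : Set (H →L[ℂ] H)) extends IsBanachModule H M : Prop where
  star_mem : ∀ {A : H →L[ℂ] H}, A ∈ M → ContinuousLinearMap.adjoint A ∈ M

/-- `B₀ˡ(H,K)`: the closed linear span of the operators `A ∘ T` with `A` in the multiplier
algebra of `K` and `T ∈ B(H,K)` (operators left vanishing at infinity). -/
def B0l [NormedAddCommGroup H] [NormedSpace ℂ H] [NormedAddCommGroup K] [NormedSpace ℂ K]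
    (MK : Set (K →L[ℂ] K)) : Set (H →L[ℂ] K) :=
  closure (↑(Submodule.span ℂ
    {S : H →L[ℂ] K | ∃ A ∈ MK, ∃ T : H →L[ℂ] K, S = A.comp T}) : Set (H →L[ℂ] K))

/-- `B₀ʳ(H,K)`: the closed linear span of the operators `T ∘ A` with `A` in the multiplier
algebra of `H` and `T ∈ B(H,K)` (operators right vanishing at infinity). -/
def B0r [NormedAddCommGroup H] [NormedSpace ℂ H] [NormedAddCommGroup K] [NormedSpace ℂ K]
    (MH : Set (H →L[ℂ] H)) : Set (H →L[ℂ] K) :=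
  closure (↑(Submodule.span ℂ
    {S : H →L[ℂ] K | ∃ A ∈ MH, ∃ T : H →L[ℂ] K, S = T.comp A}) : Set (H →L[ℂ] K))

/-- `S ∈ B(H,K)` is left decay preserving. -/
def LeftDecayPreserving [NormedAddCommGroup H] [NormedSpace ℂ H] [NormedAddCommGroup K]
    [NormedSpace ℂ K] (MH : Set (H →L[ℂ] H)) (MK : Set (K →L[ℂ] K))
    (S : H →L[ℂ] K) : Prop :=
  ∀ A ∈ MH, S.comp A ∈ B0l MK

/-- `S ∈ B(H,K)` is right decay preserving. -/
def RightDecayPreserving [NormedAddCommGroup H] [NormedSpace ℂ H] [NormedAddCommGroup K]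
    [NormedSpace ℂ K] (MH : Set (H →L[ℂ] H)) (MK : Set (K →L[ℂ] K))
    (S : H →L[ℂ] K) : Prop :=
  ∀ A ∈ MK, A.comp S ∈ B0r MH

open scoped ZeroAtInfty

/-- A Banach `X`-module (over the topological space `X`): a Banach space `H` with a
continuous non-unital algebra morphism `φ ↦ φ(Q)` from `C₀(X)` into `B(H)` whose range
acts non-degenerately. -/
structure BanachXModule (X : Type*) [TopologicalSpace X]
    (H : Type*) [NormedAddCommGroup H] [NormedSpace ℂ H] where
  Q : C₀(X, ℂ) →ₙₐ[ℂ] (H →L[ℂ] H)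
  continuous_Q : Continuous Q
  nondegenerate : Dense
    (↑(Submodule.span ℂ {u : H | ∃ φ : C₀(X, ℂ), ∃ v : H, u = Q φ v}) : Set H)

/-- The multiplier algebra of a Banach `X`-module: the norm closure of the image of
`C₀(X)`. -/
def BanachXModule.mult {X : Type*} [TopologicalSpace X] {H : Type*} [NormedAddCommGroup H]
    [NormedSpace ℂ H] (B : BanachXModule X H) : Set (H →L[ℂ] H) :=
  closure (Set.range fun φ : C₀(X, ℂ) => B.Q φ)

section Stmt2Aux

open Filter Topology Set

variable {X : Type*} [TopologicalSpace X]

private lemma stmt2_c0_norm_le {f : C₀(X, ℂ)} {c : ℝ} (hc : 0 ≤ c) (h : ∀ x, ‖f x‖ ≤ c) :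
    ‖f‖ ≤ c := by
  rw [← ZeroAtInftyContinuousMap.norm_toBCF_eq_norm]
  exact (BoundedContinuousFunction.norm_le hc).mpr h

private lemma stmt2_mul_div_le {a ε : ℝ} (ha : 0 ≤ a) (hε : 0 < ε) :
    a * (ε / (a + 1)) ≤ ε := by
  rw [mul_div_assoc', div_le_iff₀ (by positivity)]
  nlinarith

/-- Package a compactly supported continuous function as an element of `C₀`. -/
private def stmt2_ofCc (f : X → ℂ) (hc : Continuous f) (hf : HasCompactSupport f) :
    C₀(X, ℂ) :=
  { toFun := f
    continuous_toFun := hc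
    zero_at_infty' := hf.is_zero_at_infty }

@[simp] private lemma stmt2_ofCc_apply (f : X → ℂ) (hc : Continuous f)
    (hf : HasCompactSupport f) (x : X) : stmt2_ofCc f hc hf x = f x := rfl

/-- The representation `Q` is a bounded linear map. -/
private lemma stmt2_Q_bound {E : Type*} [NormedAddCommGroup E] [NormedSpace ℂ E]
    (B : BanachXModule X E) : ∃ M : ℝ, 0 < M ∧ ∀ φ : C₀(X, ℂ), ‖B.Q φ‖ ≤ M * ‖φ‖ :=
  SemilinearMapClass.bound_of_continuous B.Q B.continuous_Q

/-- Approximate identity property coming from non-degeneracy: cut-off functions which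
are `1` on a large compact set act almost as the identity on any given vector. -/
private lemma stmt2_approx_id {E : Type*} [NormedAddCommGroup E] [NormedSpace ℂ E]
    (B : BanachXModule X E) (v : E) {ε : ℝ} (hε : 0 < ε) :
    ∃ A : Set X, IsCompact A ∧ ∀ χ : C₀(X, ℂ), (∀ x, ‖χ x‖ ≤ 1) → (∀ x ∈ A, χ x = 1) →
      ‖B.Q χ v - v‖ ≤ ε := by
  obtain ⟨M, hM0, hM⟩ := stmt2_Q_bound B
  have key : ∀ w ∈ Submodule.span ℂ {u : E | ∃ φ : C₀(X, ℂ), ∃ v : E, u = B.Q φ v},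
      ∀ ε : ℝ, 0 < ε → ∃ A : Set X, IsCompact A ∧ ∀ χ : C₀(X, ℂ), (∀ x, ‖χ x‖ ≤ 1) →
        (∀ x ∈ A, χ x = 1) → ‖B.Q χ w - w‖ ≤ ε := by
    intro w hw
    induction hw using Submodule.span_induction with
    | mem w hw =>
      obtain ⟨ψ, y, rfl⟩ := hw
      intro ε hε
      set δ := ε / (2 * M * (‖y‖ + 1)) with hδdef
      have hδ : 0 < δ := by positivity
      have hev : ∀ᶠ x in cocompact X, ‖ψ x‖ < δ := by
        have h0 : Tendsto (⇑ψ) (cocompact X) (𝓝 0) := ZeroAtInftyContinuousMapClass.zero_at_infty ψ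
        simpa [dist_zero_right] using Metric.tendsto_nhds.mp h0 δ hδ
      obtain ⟨t, htc, hts⟩ := Filter.mem_cocompact.mp hev
      refine ⟨t, htc, fun χ hχ1 hχA => ?_⟩
      have hsub : B.Q χ (B.Q ψ y) - B.Q ψ y = B.Q (χ * ψ - ψ) y := by
        rw [map_sub, map_mul]
        simp [ContinuousLinearMap.sub_apply, ContinuousLinearMap.mul_apply]
      rw [hsub]
      have hnorm : ‖χ * ψ - ψ‖ ≤ 2 * δ := by
        refine stmt2_c0_norm_le (by positivity) fun x => ?_
        have happ : (χ * ψ - ψ) x = (χ x - 1) * ψ x := by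
          simp [ZeroAtInftyContinuousMap.coe_sub, ZeroAtInftyContinuousMap.coe_mul,
            sub_mul]
        rw [happ]
        by_cases hx : x ∈ t
        · simp [hχA x hx]
          positivity
        · have hψx : ‖ψ x‖ ≤ δ := le_of_lt (hts hx)
          have h1 : ‖χ x - 1‖ ≤ 2 := by
            have hx1 := hχ1 x
            calc ‖χ x - 1‖ ≤ ‖χ x‖ + ‖(1 : ℂ)‖ := norm_sub_le _ _
              _ ≤ 2 := by rw [norm_one]; linarith
          calc ‖(χ x - 1) * ψ x‖ = ‖χ x - 1‖ * ‖ψ x‖ := norm_mul _ _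
            _ ≤ 2 * δ := mul_le_mul h1 hψx (norm_nonneg _) (by norm_num)
      have hbound : ‖B.Q (χ * ψ - ψ) y‖ ≤ M * (2 * δ) * ‖y‖ := by
        calc ‖B.Q (χ * ψ - ψ) y‖ ≤ ‖B.Q (χ * ψ - ψ)‖ * ‖y‖ := ContinuousLinearMap.le_opNorm _ _
          _ ≤ M * ‖χ * ψ - ψ‖ * ‖y‖ :=
              mul_le_mul_of_nonneg_right (hM _) (norm_nonneg _)
          _ ≤ M * (2 * δ) * ‖y‖ := by
              have := mul_le_mul_of_nonneg_left hnorm hM0.le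
              nlinarith [norm_nonneg y]
      refine hbound.trans ?_
      have heq : M * (2 * δ) * (‖y‖ + 1) = ε := by
        rw [hδdef]; field_simp
      nlinarith [norm_nonneg y, hδ]
    | zero =>
      intro ε hε
      exact ⟨∅, isCompact_empty, fun χ _ _ => by simp [hε.le]⟩
    | add x y hx hy px py =>
      intro ε hε
      obtain ⟨A₁, hA₁c, hA₁⟩ := px (ε / 2) (by positivity)
      obtain ⟨A₂, hA₂c, hA₂⟩ := py (ε / 2) (by positivity)
      refine ⟨A₁ ∪ A₂, hA₁c.union hA₂c, fun χ h1 h2 => ?_⟩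
      have he : B.Q χ (x + y) - (x + y) = (B.Q χ x - x) + (B.Q χ y - y) := by
        rw [map_add]; abel
      rw [he]
      have b1 := hA₁ χ h1 fun z hz => h2 z (Or.inl hz)
      have b2 := hA₂ χ h1 fun z hz => h2 z (Or.inr hz)
      calc ‖(B.Q χ x - x) + (B.Q χ y - y)‖ ≤ ‖B.Q χ x - x‖ + ‖B.Q χ y - y‖ := norm_add_le _ _
        _ ≤ ε := by linarith
    | smul a x hx px =>
      intro ε hε
      obtain ⟨A, hAc, hA⟩ := px (ε / (‖a‖ + 1)) (by positivity)
      refine ⟨A, hAc, fun χ h1 h2 => ?_⟩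
      have he : B.Q χ (a • x) - a • x = a • (B.Q χ x - x) := by
        rw [map_smul, smul_sub]
      rw [he, norm_smul]
      have hb := hA χ h1 h2
      have h3 : ‖a‖ * ‖B.Q χ x - x‖ ≤ ‖a‖ * (ε / (‖a‖ + 1)) :=
        mul_le_mul_of_nonneg_left hb (norm_nonneg a)
      exact h3.trans (stmt2_mul_div_le (norm_nonneg a) hε)
  have hv : v ∈ closure (↑(Submodule.span ℂ
      {u : E | ∃ φ : C₀(X, ℂ), ∃ v : E, u = B.Q φ v}) : Set E) := B.nondegenerate v
  obtain ⟨w, hw, hvw⟩ := Metric.mem_closure_iff.mp hv (ε / (2 * (M + 1))) (by positivity)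
  obtain ⟨A, hAc, hA⟩ := key w hw (ε / 2) (by positivity)
  refine ⟨A, hAc, fun χ h1 h2 => ?_⟩
  have hχn : ‖B.Q χ‖ ≤ M := by
    have := hM χ
    have hc1 : ‖χ‖ ≤ 1 := stmt2_c0_norm_le zero_le_one h1
    nlinarith
  have he : B.Q χ v - v = B.Q χ (v - w) + (B.Q χ w - w) + (w - v) := by
    rw [map_sub]; abel
  rw [he]
  have hd : ‖v - w‖ < ε / (2 * (M + 1)) := by rwa [← dist_eq_norm]
  have b1 : ‖B.Q χ (v - w)‖ ≤ M * ‖v - w‖ := by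
    calc ‖B.Q χ (v - w)‖ ≤ ‖B.Q χ‖ * ‖v - w‖ := ContinuousLinearMap.le_opNorm _ _
      _ ≤ M * ‖v - w‖ := mul_le_mul_of_nonneg_right hχn (norm_nonneg _)
  have b2 := hA χ h1 h2
  have b3 : ‖w - v‖ = ‖v - w‖ := norm_sub_rev _ _
  calc ‖B.Q χ (v - w) + (B.Q χ w - w) + (w - v)‖
      ≤ ‖B.Q χ (v - w) + (B.Q χ w - w)‖ + ‖w - v‖ := norm_add_le _ _
    _ ≤ ‖B.Q χ (v - w)‖ + ‖B.Q χ w - w‖ + ‖w - v‖ := by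
        have := norm_add_le (B.Q χ (v - w)) (B.Q χ w - w); linarith
    _ ≤ ε := by
        rw [b3]
        have hM1 : (M + 1) * ‖v - w‖ ≤ (M + 1) * (ε / (2 * (M + 1))) :=
          mul_le_mul_of_nonneg_left hd.le (by positivity)
        have : (M + 1) * (ε / (2 * (M + 1))) = ε / 2 := by field_simp
        nlinarith [norm_nonneg (v - w)]

/-- Urysohn-type cutoff. -/
private lemma stmt2_cutoff [LocallyCompactSpace X] [T2Space X] {A : Set X}
    (hA : IsCompact A) :
    ∃ χ : C(X, ℝ), (∀ x ∈ A, χ x = 1) ∧ HasCompactSupport ⇑χ ∧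
      ∀ x, 0 ≤ χ x ∧ χ x ≤ 1 := by
  obtain ⟨f, h1, _, h3, h4⟩ := exists_continuous_one_zero_of_isCompact hA isClosed_empty
    (Set.disjoint_empty _)
  exact ⟨f, fun x hx => h1 hx, h3, fun x => ⟨(h4 x).1, (h4 x).2⟩⟩

/-- Membership in a closed set via `ε`-approximation. -/
private lemma stmt2_mem_of_approx {E : Type*} [NormedAddCommGroup E] {s : Set E}
    (hs : IsClosed s) {x : E} (h : ∀ ε : ℝ, 0 < ε → ∃ y ∈ s, ‖x - y‖ ≤ ε) : x ∈ s := by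
  rw [← hs.closure_eq, Metric.mem_closure_iff]
  intro ε hε
  obtain ⟨y, hy, hxy⟩ := h (ε / 2) (by positivity)
  exact ⟨y, hy, by rw [dist_eq_norm]; linarith⟩

/-- Every multiplier can be approximated by `Q ψ` with `ψ` compactly supported. -/
private lemma stmt2_approx_by_cc [LocallyCompactSpace X] [T2Space X]
    {E : Type*} [NormedAddCommGroup E] [NormedSpace ℂ E]
    (B : BanachXModule X E) {A : E →L[ℂ] E} (hA : A ∈ B.mult) {ε : ℝ} (hε : 0 < ε) :
    ∃ ψ : C₀(X, ℂ), HasCompactSupport ⇑ψ ∧ ‖A - B.Q ψ‖ ≤ ε := by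
  obtain ⟨M, hM0, hM⟩ := stmt2_Q_bound B
  obtain ⟨v, hv, hd⟩ := Metric.mem_closure_iff.mp hA (ε / 2) (by positivity)
  obtain ⟨φ, rfl⟩ := hv
  set δ := ε / (2 * (M + 1)) with hδdef
  have hδ : 0 < δ := by positivity
  have hev : ∀ᶠ x in cocompact X, ‖φ x‖ < δ := by
    have h0 : Tendsto (⇑φ) (cocompact X) (𝓝 0) := ZeroAtInftyContinuousMapClass.zero_at_infty φ
    simpa [dist_zero_right] using Metric.tendsto_nhds.mp h0 δ hδ
  obtain ⟨t, htc, hts⟩ := Filter.mem_cocompact.mp hev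
  obtain ⟨χ, hχ1, hχs, hχ01⟩ := stmt2_cutoff htc
  set χc : C₀(X, ℂ) := stmt2_ofCc (fun x => (χ x : ℂ))
    (Complex.continuous_ofReal.comp χ.continuous)
    (HasCompactSupport.intro hχs fun x hx => by
      rw [image_eq_zero_of_notMem_tsupport hx, Complex.ofReal_zero]) with hχc
  refine ⟨χc * φ, ?_, ?_⟩
  · refine HasCompactSupport.intro hχs fun x hx => ?_
    have : χc x = 0 := by
      simp [hχc, image_eq_zero_of_notMem_tsupport hx]
    simp [ZeroAtInftyContinuousMap.coe_mul, this]
  · have h1 : ‖φ - χc * φ‖ ≤ δ := by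
      refine stmt2_c0_norm_le hδ.le fun x => ?_
      have happ : (φ - χc * φ) x = (1 - (χ x : ℂ)) * φ x := by
        simp [ZeroAtInftyContinuousMap.coe_sub, ZeroAtInftyContinuousMap.coe_mul, hχc,
          sub_mul]
      rw [happ]
      by_cases hx : x ∈ t
      · simp [hχ1 x hx]
        positivity
      · have hφx : ‖φ x‖ ≤ δ := le_of_lt (hts hx)
        have h2 : ‖(1 : ℂ) - (χ x : ℂ)‖ ≤ 1 := by
          have : ((1 : ℝ) : ℂ) - (χ x : ℂ) = ((1 - χ x : ℝ) : ℂ) := by push_cast; ring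
          rw [show (1 : ℂ) = ((1 : ℝ) : ℂ) by norm_num, this, Complex.norm_real,
            Real.norm_eq_abs, abs_le]
          constructor <;> [linarith [(hχ01 x).2]; linarith [(hχ01 x).1]]
        calc ‖(1 - (χ x : ℂ)) * φ x‖ = ‖(1 : ℂ) - (χ x : ℂ)‖ * ‖φ x‖ := norm_mul _ _
          _ ≤ 1 * δ := mul_le_mul h2 hφx (norm_nonneg _) zero_le_one
          _ = δ := one_mul δ
    have h2 : ‖B.Q φ - B.Q (χc * φ)‖ ≤ M * δ := by
      rw [← map_sub]
      exact (hM _).trans (mul_le_mul_of_nonneg_left h1 hM0.le)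
    have hd' : ‖A - B.Q φ‖ < ε / 2 := by rwa [← dist_eq_norm]
    have hMδ : M * δ ≤ ε / 2 := by
      rw [hδdef, mul_div_assoc', div_le_div_iff₀ (by positivity) (by norm_num)]
      nlinarith
    calc ‖A - B.Q (χc * φ)‖ ≤ ‖A - B.Q φ‖ + ‖B.Q φ - B.Q (χc * φ)‖ := by
          have := norm_add_le (A - B.Q φ) (B.Q φ - B.Q (χc * φ))
          simpa using this
      _ ≤ ε := by linarith

section Core

variable [LocallyCompactSpace X] [T2Space X]
variable {H' K' : Type*} [NormedAddCommGroup H'] [NormedSpace ℂ H']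
  [NormedAddCommGroup K'] [NormedSpace ℂ K']

set_option maxHeartbeats 1600000 in
/-- Core of the left statement: for compactly supported `φ`,
`S ∘ Q(φ)` is left vanishing at infinity. -/
private lemma stmt2_core_left
    (BH : BanachXModule X H') (BK : BanachXModule X K')
    (S : H' →L[ℂ] K') (θ : C(X, ℝ)) (hθ1 : ∀ x, 1 ≤ θ x)
    (hθinf : Filter.Tendsto ⇑θ (Filter.cocompact X) Filter.atTop)
    {C : ℝ} (hC : 0 ≤ C)
    (h : ∀ ξ η Φ Ψ : C₀(X, ℂ), HasCompactSupport ⇑ξ → HasCompactSupport ⇑η →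
        (∀ x, Φ x = ξ x * (θ x : ℂ)) → (∀ x, Ψ x = (θ x : ℂ)⁻¹ * η x) →
        ‖(BK.Q Φ).comp (S.comp (BH.Q Ψ))‖ ≤ C * ‖ξ‖ * ‖η‖)
    (φ : C₀(X, ℂ)) (hφ : HasCompactSupport ⇑φ) :
    S.comp (BH.Q φ) ∈ B0l (H := H') (K := K') BK.mult := by
  set T := S.comp (BH.Q φ) with hT
  have hθpos : ∀ x, (0 : ℝ) < θ x := fun x => lt_of_lt_of_le one_pos (hθ1 x)
  have hθne : ∀ x, (θ x : ℂ) ≠ 0 := fun x => Complex.ofReal_ne_zero.mpr (hθpos x).ne'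
  have hηs : HasCompactSupport fun x => (θ x : ℂ) * φ x :=
    HasCompactSupport.intro hφ fun x hx => by
      rw [image_eq_zero_of_notMem_tsupport hx, mul_zero]
  set η : C₀(X, ℂ) := stmt2_ofCc (fun x => (θ x : ℂ) * φ x)
    ((Complex.continuous_ofReal.comp θ.continuous).mul (map_continuous φ)) hηs with hη
  set D := C * ‖η‖ with hD
  have hD0 : 0 ≤ D := mul_nonneg hC (norm_nonneg _)
  have hclosed : IsClosed (B0l (H := H') (K := K') BK.mult) := isClosed_closure
  apply stmt2_mem_of_approx hclosed
  intro ε hε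
  set δ := ε / (2 * (D + 1)) with hδdef
  have hδ : 0 < δ := by positivity
  have hev : ∀ᶠ x in cocompact X, δ⁻¹ ≤ θ x :=
    hθinf.eventually (Filter.eventually_ge_atTop δ⁻¹)
  obtain ⟨t, htc, hts⟩ := Filter.mem_cocompact.mp hev
  obtain ⟨χ, hχ1, hχs, hχ01⟩ := stmt2_cutoff htc
  set χc : C₀(X, ℂ) := stmt2_ofCc (fun x => (χ x : ℂ))
    (Complex.continuous_ofReal.comp χ.continuous)
    (HasCompactSupport.intro hχs fun x hx => by
      rw [image_eq_zero_of_notMem_tsupport hx, Complex.ofReal_zero]) with hχc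
  refine ⟨(BK.Q χc).comp T, subset_closure (Submodule.subset_span
    ⟨BK.Q χc, subset_closure ⟨χc, rfl⟩, T, rfl⟩), ?_⟩
  have main : ∀ u : H', ‖(T - (BK.Q χc).comp T) u‖ ≤ D * δ * ‖u‖ := by
    intro u
    refine le_of_forall_pos_le_add fun ε' hε' => ?_
    set v := T u with hv
    obtain ⟨A, hAc, hA⟩ := stmt2_approx_id BK v hε'
    obtain ⟨χ', hχ'1, hχ's, hχ'01⟩ := stmt2_cutoff (htc.union hAc)
    set χc' : C₀(X, ℂ) := stmt2_ofCc (fun x => (χ' x : ℂ))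
      (Complex.continuous_ofReal.comp χ'.continuous)
      (HasCompactSupport.intro hχ's fun x hx => by
        rw [image_eq_zero_of_notMem_tsupport hx, Complex.ofReal_zero]) with hχc'
    have hξs : HasCompactSupport fun x => (((θ x)⁻¹ * (χ' x - χ x) : ℝ) : ℂ) := by
      refine HasCompactSupport.intro (hχ's.union hχs) fun x hx => ?_
      rw [Set.mem_union] at hx
      push_neg at hx
      rw [image_eq_zero_of_notMem_tsupport hx.1, image_eq_zero_of_notMem_tsupport hx.2]
      simp
    set ξ : C₀(X, ℂ) := stmt2_ofCc (fun x => (((θ x)⁻¹ * (χ' x - χ x) : ℝ) : ℂ))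
      (Complex.continuous_ofReal.comp
        ((θ.continuous.inv₀ fun x => (hθpos x).ne').mul
          (χ'.continuous.sub χ.continuous))) hξs with hξ
    set Φ : C₀(X, ℂ) := χc' - χc with hΦdef
    have hΦ : ∀ x, Φ x = ξ x * (θ x : ℂ) := by
      intro x
      have hne := hθne x
      simp only [hΦdef, ZeroAtInftyContinuousMap.coe_sub, Pi.sub_apply, hχc, hχc', hξ,
        stmt2_ofCc_apply]
      push_cast
      field_simp
    have hΨ : ∀ x, φ x = (θ x : ℂ)⁻¹ * η x := by
      intro x
      simp only [hη, stmt2_ofCc_apply]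
      rw [← mul_assoc, inv_mul_cancel₀ (hθne x), one_mul]
    have happ := h ξ η Φ φ hξs hηs hΦ hΨ
    have hξn : ‖ξ‖ ≤ δ := by
      refine stmt2_c0_norm_le hδ.le fun x => ?_
      by_cases hx : x ∈ t
      · have h1 : χ x = 1 := hχ1 x hx
        have h2 : χ' x = 1 := hχ'1 x (Or.inl hx)
        simp [hξ, h1, h2, hδ.le]
      · have hθx : δ⁻¹ ≤ θ x := hts hx
        have hinv : (θ x)⁻¹ ≤ δ := inv_le_of_inv_le₀ hδ hθx
        have hd : |χ' x - χ x| ≤ 1 := by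
          rw [abs_le]
          constructor <;> [linarith [(hχ'01 x).1, (hχ01 x).2]; linarith [(hχ'01 x).2, (hχ01 x).1]]
        calc ‖ξ x‖ = |(θ x)⁻¹ * (χ' x - χ x)| := by
              rw [hξ, stmt2_ofCc_apply, Complex.norm_real, Real.norm_eq_abs]
          _ = (θ x)⁻¹ * |χ' x - χ x| := by
              rw [abs_mul, abs_of_nonneg (inv_nonneg.mpr (hθpos x).le)]
          _ ≤ δ * 1 := mul_le_mul hinv hd (abs_nonneg _) hδ.le
          _ = δ := mul_one δ
    have step1 : (T - (BK.Q χc).comp T) u = (v - BK.Q χc' v) + (BK.Q Φ) v := by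
      have e1 : (BK.Q Φ) v = BK.Q χc' v - BK.Q χc v := by
        rw [hΦdef, map_sub]; simp [ContinuousLinearMap.sub_apply]
      rw [e1]
      simp only [ContinuousLinearMap.sub_apply, ContinuousLinearMap.comp_apply, ← hv]
      abel
    rw [step1]
    have b1 : ‖v - BK.Q χc' v‖ ≤ ε' := by
      rw [norm_sub_rev]
      refine hA χc' (fun x => ?_) (fun x hx => ?_)
      · rw [hχc', stmt2_ofCc_apply, Complex.norm_real, Real.norm_eq_abs, abs_le]
        constructor <;> [linarith [(hχ'01 x).1]; linarith [(hχ'01 x).2]]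
      · rw [hχc', stmt2_ofCc_apply, hχ'1 x (Or.inr hx), Complex.ofReal_one]
    have b2 : ‖(BK.Q Φ) v‖ ≤ D * δ * ‖u‖ := by
      have e2 : (BK.Q Φ) v = ((BK.Q Φ).comp (S.comp (BH.Q φ))) u := by
        simp [ContinuousLinearMap.comp_apply, hv, hT]
      rw [e2]
      calc ‖((BK.Q Φ).comp (S.comp (BH.Q φ))) u‖
          ≤ ‖(BK.Q Φ).comp (S.comp (BH.Q φ))‖ * ‖u‖ := ContinuousLinearMap.le_opNorm _ _
        _ ≤ C * ‖ξ‖ * ‖η‖ * ‖u‖ := mul_le_mul_of_nonneg_right happ (norm_nonneg u)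
        _ ≤ D * δ * ‖u‖ := by
            have hs : C * ‖ξ‖ * ‖η‖ ≤ C * δ * ‖η‖ := by
              have := mul_le_mul_of_nonneg_left hξn hC
              nlinarith [norm_nonneg η]
            have : C * δ * ‖η‖ = D * δ := by rw [hD]; ring
            nlinarith [norm_nonneg u]
    calc ‖(v - BK.Q χc' v) + (BK.Q Φ) v‖ ≤ ‖v - BK.Q χc' v‖ + ‖(BK.Q Φ) v‖ := norm_add_le _ _
      _ ≤ D * δ * ‖u‖ + ε' := by linarith
  have hop : ‖T - (BK.Q χc).comp T‖ ≤ D * δ :=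
    ContinuousLinearMap.opNorm_le_bound _ (by positivity) main
  refine hop.trans ?_
  rw [hδdef]
  calc D * (ε / (2 * (D + 1))) ≤ ε / 2 := by
        rw [mul_div_assoc', div_le_div_iff₀ (by positivity) (by norm_num)]
        nlinarith
    _ ≤ ε := by linarith

set_option maxHeartbeats 1600000 in
/-- Core of the right statement: for compactly supported `φ`,
`Q(φ) ∘ S` is right vanishing at infinity. -/
private lemma stmt2_core_right
    (BH : BanachXModule X H') (BK : BanachXModule X K')
    (S : H' →L[ℂ] K') (θ : C(X, ℝ)) (hθ1 : ∀ x, 1 ≤ θ x)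
    (hθinf : Filter.Tendsto ⇑θ (Filter.cocompact X) Filter.atTop)
    {C : ℝ} (hC : 0 ≤ C)
    (h : ∀ ξ η Φ Ψ : C₀(X, ℂ), HasCompactSupport ⇑ξ → HasCompactSupport ⇑η →
        (∀ x, Φ x = ξ x * (θ x : ℂ)⁻¹) → (∀ x, Ψ x = (θ x : ℂ) * η x) →
        ‖(BK.Q Φ).comp (S.comp (BH.Q Ψ))‖ ≤ C * ‖ξ‖ * ‖η‖)
    (φ : C₀(X, ℂ)) (hφ : HasCompactSupport ⇑φ) :
    (BK.Q φ).comp S ∈ B0r (H := H') (K := K') BH.mult := by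
  set T := (BK.Q φ).comp S with hT
  have hθpos : ∀ x, (0 : ℝ) < θ x := fun x => lt_of_lt_of_le one_pos (hθ1 x)
  have hθne : ∀ x, (θ x : ℂ) ≠ 0 := fun x => Complex.ofReal_ne_zero.mpr (hθpos x).ne'
  have hξfs : HasCompactSupport fun x => (θ x : ℂ) * φ x :=
    HasCompactSupport.intro hφ fun x hx => by
      rw [image_eq_zero_of_notMem_tsupport hx, mul_zero]
  set ξf : C₀(X, ℂ) := stmt2_ofCc (fun x => (θ x : ℂ) * φ x)
    ((Complex.continuous_ofReal.comp θ.continuous).mul (map_continuous φ)) hξfs with hξf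
  have hΦfix : ∀ x, φ x = ξf x * (θ x : ℂ)⁻¹ := by
    intro x
    simp only [hξf, stmt2_ofCc_apply]
    rw [mul_comm ((θ x : ℂ)) (φ x), mul_assoc, mul_inv_cancel₀ (hθne x), mul_one]
  set D := C * ‖ξf‖ with hD
  have hD0 : 0 ≤ D := mul_nonneg hC (norm_nonneg _)
  have hclosed : IsClosed (B0r (H := H') (K := K') BH.mult) := isClosed_closure
  apply stmt2_mem_of_approx hclosed
  intro ε hε
  set δ := ε / (2 * (D + 1)) with hδdef
  have hδ : 0 < δ := by positivity
  have hev : ∀ᶠ x in cocompact X, δ⁻¹ ≤ θ x :=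
    hθinf.eventually (Filter.eventually_ge_atTop δ⁻¹)
  obtain ⟨t, htc, hts⟩ := Filter.mem_cocompact.mp hev
  obtain ⟨χ, hχ1, hχs, hχ01⟩ := stmt2_cutoff htc
  set χc : C₀(X, ℂ) := stmt2_ofCc (fun x => (χ x : ℂ))
    (Complex.continuous_ofReal.comp χ.continuous)
    (HasCompactSupport.intro hχs fun x hx => by
      rw [image_eq_zero_of_notMem_tsupport hx, Complex.ofReal_zero]) with hχc
  refine ⟨T.comp (BH.Q χc), subset_closure (Submodule.subset_span
    ⟨BH.Q χc, subset_closure ⟨χc, rfl⟩, T, rfl⟩), ?_⟩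
  have main : ∀ u : H', ‖(T - T.comp (BH.Q χc)) u‖ ≤ D * δ * ‖u‖ := by
    intro u
    refine le_of_forall_pos_le_add fun ε' hε' => ?_
    have hε'' : 0 < ε' / (‖T‖ + 1) := by positivity
    obtain ⟨A, hAc, hA⟩ := stmt2_approx_id BH u hε''
    obtain ⟨χ', hχ'1, hχ's, hχ'01⟩ := stmt2_cutoff (htc.union hAc)
    set χc' : C₀(X, ℂ) := stmt2_ofCc (fun x => (χ' x : ℂ))
      (Complex.continuous_ofReal.comp χ'.continuous)
      (HasCompactSupport.intro hχ's fun x hx => by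
        rw [image_eq_zero_of_notMem_tsupport hx, Complex.ofReal_zero]) with hχc'
    have hηs : HasCompactSupport fun x => (((θ x)⁻¹ * (χ' x - χ x) : ℝ) : ℂ) := by
      refine HasCompactSupport.intro (hχ's.union hχs) fun x hx => ?_
      rw [Set.mem_union] at hx
      push_neg at hx
      rw [image_eq_zero_of_notMem_tsupport hx.1, image_eq_zero_of_notMem_tsupport hx.2]
      simp
    set η : C₀(X, ℂ) := stmt2_ofCc (fun x => (((θ x)⁻¹ * (χ' x - χ x) : ℝ) : ℂ))
      (Complex.continuous_ofReal.comp
        ((θ.continuous.inv₀ fun x => (hθpos x).ne').mul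
          (χ'.continuous.sub χ.continuous))) hηs with hη
    set Ψ : C₀(X, ℂ) := χc' - χc with hΨdef
    have hΨ : ∀ x, Ψ x = (θ x : ℂ) * η x := by
      intro x
      have hne := hθne x
      simp only [hΨdef, ZeroAtInftyContinuousMap.coe_sub, Pi.sub_apply, hχc, hχc', hη,
        stmt2_ofCc_apply]
      push_cast
      field_simp
    have happ := h ξf η φ Ψ hξfs hηs hΦfix hΨ
    have hηn : ‖η‖ ≤ δ := by
      refine stmt2_c0_norm_le hδ.le fun x => ?_
      by_cases hx : x ∈ t
      · have h1 : χ x = 1 := hχ1 x hx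
        have h2 : χ' x = 1 := hχ'1 x (Or.inl hx)
        simp [hη, h1, h2, hδ.le]
      · have hθx : δ⁻¹ ≤ θ x := hts hx
        have hinv : (θ x)⁻¹ ≤ δ := inv_le_of_inv_le₀ hδ hθx
        have hd : |χ' x - χ x| ≤ 1 := by
          rw [abs_le]
          constructor <;> [linarith [(hχ'01 x).1, (hχ01 x).2]; linarith [(hχ'01 x).2, (hχ01 x).1]]
        calc ‖η x‖ = |(θ x)⁻¹ * (χ' x - χ x)| := by
              rw [hη, stmt2_ofCc_apply, Complex.norm_real, Real.norm_eq_abs]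
          _ = (θ x)⁻¹ * |χ' x - χ x| := by
              rw [abs_mul, abs_of_nonneg (inv_nonneg.mpr (hθpos x).le)]
          _ ≤ δ * 1 := mul_le_mul hinv hd (abs_nonneg _) hδ.le
          _ = δ := mul_one δ
    have step1 : (T - T.comp (BH.Q χc)) u = T (u - BH.Q χc' u) + T ((BH.Q Ψ) u) := by
      have e1 : (BH.Q Ψ) u = BH.Q χc' u - BH.Q χc u := by
        rw [hΨdef, map_sub]; simp [ContinuousLinearMap.sub_apply]
      rw [e1]
      simp only [ContinuousLinearMap.sub_apply, ContinuousLinearMap.comp_apply, map_sub]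
      abel
    rw [step1]
    have b1 : ‖T (u - BH.Q χc' u)‖ ≤ ε' := by
      have hb : ‖u - BH.Q χc' u‖ ≤ ε' / (‖T‖ + 1) := by
        rw [norm_sub_rev]
        refine hA χc' (fun x => ?_) (fun x hx => ?_)
        · rw [hχc', stmt2_ofCc_apply, Complex.norm_real, Real.norm_eq_abs, abs_le]
          constructor <;> [linarith [(hχ'01 x).1]; linarith [(hχ'01 x).2]]
        · rw [hχc', stmt2_ofCc_apply, hχ'1 x (Or.inr hx), Complex.ofReal_one]
      calc ‖T (u - BH.Q χc' u)‖ ≤ ‖T‖ * ‖u - BH.Q χc' u‖ := ContinuousLinearMap.le_opNorm _ _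
        _ ≤ ‖T‖ * (ε' / (‖T‖ + 1)) := mul_le_mul_of_nonneg_left hb (norm_nonneg T)
        _ ≤ ε' := stmt2_mul_div_le (norm_nonneg T) hε'
    have b2 : ‖T ((BH.Q Ψ) u)‖ ≤ D * δ * ‖u‖ := by
      have e2 : T ((BH.Q Ψ) u) = ((BK.Q φ).comp (S.comp (BH.Q Ψ))) u := by
        simp [ContinuousLinearMap.comp_apply, hT]
      rw [e2]
      calc ‖((BK.Q φ).comp (S.comp (BH.Q Ψ))) u‖
          ≤ ‖(BK.Q φ).comp (S.comp (BH.Q Ψ))‖ * ‖u‖ := ContinuousLinearMap.le_opNorm _ _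
        _ ≤ C * ‖ξf‖ * ‖η‖ * ‖u‖ := mul_le_mul_of_nonneg_right happ (norm_nonneg u)
        _ ≤ D * δ * ‖u‖ := by
            have hs : C * ‖ξf‖ * ‖η‖ ≤ C * ‖ξf‖ * δ := by
              have hCξ : 0 ≤ C * ‖ξf‖ := mul_nonneg hC (norm_nonneg _)
              exact mul_le_mul_of_nonneg_left hηn hCξ
            have : C * ‖ξf‖ * δ = D * δ := by rw [hD]
            nlinarith [norm_nonneg u]
    calc ‖T (u - BH.Q χc' u) + T ((BH.Q Ψ) u)‖
        ≤ ‖T (u - BH.Q χc' u)‖ + ‖T ((BH.Q Ψ) u)‖ := norm_add_le _ _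
      _ ≤ D * δ * ‖u‖ + ε' := by linarith
  have hop : ‖T - T.comp (BH.Q χc)‖ ≤ D * δ :=
    ContinuousLinearMap.opNorm_le_bound _ (by positivity) main
  refine hop.trans ?_
  rw [hδdef]
  calc D * (ε / (2 * (D + 1))) ≤ ε / 2 := by
        rw [mul_div_assoc', div_le_div_iff₀ (by positivity) (by norm_num)]
        nlinarith
    _ ≤ ε := by linarith

end Core

end Stmt2Aux

/-- Let `X` be locally compact non-compact Hausdorff, `H`, `K` Banach
`X`-modules, `S ∈ B(H,K)` and `θ : X → [1,∞)` continuous with `θ(x) → ∞` at infinity.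
If `θ(Q) S θ⁻¹(Q)` is bounded (in the sense that
`‖(ξθ)(Q) S (θ⁻¹η)(Q)‖ ≤ C sup|ξ| sup|η|` for all `ξ, η ∈ C_c(X)`) then `S` is left
decay preserving; if `θ⁻¹(Q) S θ(Q)` is bounded then `S` is right decay preserving. -/
theorem stmt2 {X : Type*} [TopologicalSpace X] [LocallyCompactSpace X] [T2Space X]
    [NoncompactSpace X]
    {H K : Type*} [NormedAddCommGroup H] [NormedSpace ℂ H] [CompleteSpace H]
    [NormedAddCommGroup K] [NormedSpace ℂ K] [CompleteSpace K]
    (BH : BanachXModule X H) (BK : BanachXModule X K)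
    (S : H →L[ℂ] K) (θ : C(X, ℝ)) (hθ1 : ∀ x, 1 ≤ θ x)
    (hθinf : Filter.Tendsto ⇑θ (Filter.cocompact X) Filter.atTop) :
    ((∃ C : ℝ, ∀ ξ η Φ Ψ : C₀(X, ℂ), HasCompactSupport ⇑ξ → HasCompactSupport ⇑η →
        (∀ x, Φ x = ξ x * (θ x : ℂ)) → (∀ x, Ψ x = (θ x : ℂ)⁻¹ * η x) →
        ‖(BK.Q Φ).comp (S.comp (BH.Q Ψ))‖ ≤ C * ‖ξ‖ * ‖η‖) →
      LeftDecayPreserving BH.mult BK.mult S) ∧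
    ((∃ C : ℝ, ∀ ξ η Φ Ψ : C₀(X, ℂ), HasCompactSupport ⇑ξ → HasCompactSupport ⇑η →
        (∀ x, Φ x = ξ x * (θ x : ℂ)⁻¹) → (∀ x, Ψ x = (θ x : ℂ) * η x) →
        ‖(BK.Q Φ).comp (S.comp (BH.Q Ψ))‖ ≤ C * ‖ξ‖ * ‖η‖) →
      RightDecayPreserving BH.mult BK.mult S) := by
  constructor
  · rintro ⟨C, hC⟩ A hA
    have hC' : ∀ ξ η Φ Ψ : C₀(X, ℂ), HasCompactSupport ⇑ξ → HasCompactSupport ⇑η →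
        (∀ x, Φ x = ξ x * (θ x : ℂ)) → (∀ x, Ψ x = (θ x : ℂ)⁻¹ * η x) →
        ‖(BK.Q Φ).comp (S.comp (BH.Q Ψ))‖ ≤ max C 0 * ‖ξ‖ * ‖η‖ := by
      intro ξ η Φ Ψ h1 h2 h3 h4
      refine (hC ξ η Φ Ψ h1 h2 h3 h4).trans ?_
      exact mul_le_mul_of_nonneg_right
        (mul_le_mul_of_nonneg_right (le_max_left C 0) (norm_nonneg ξ)) (norm_nonneg η)
    have hclosed : IsClosed (B0l (H := H) (K := K) BK.mult) := isClosed_closure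
    apply stmt2_mem_of_approx hclosed
    intro ε hε
    obtain ⟨ψ, hψc, hψ⟩ := stmt2_approx_by_cc BH hA
      (ε := ε / (‖S‖ + 1)) (by positivity)
    refine ⟨S.comp (BH.Q ψ),
      stmt2_core_left BH BK S θ hθ1 hθinf (le_max_right C 0) hC' ψ hψc, ?_⟩
    calc ‖S.comp A - S.comp (BH.Q ψ)‖ = ‖S.comp (A - BH.Q ψ)‖ := by
          rw [ContinuousLinearMap.comp_sub]
      _ ≤ ‖S‖ * ‖A - BH.Q ψ‖ := ContinuousLinearMap.opNorm_comp_le _ _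
      _ ≤ ‖S‖ * (ε / (‖S‖ + 1)) := mul_le_mul_of_nonneg_left hψ (norm_nonneg S)
      _ ≤ ε := stmt2_mul_div_le (norm_nonneg S) hε
  · rintro ⟨C, hC⟩ A hA
    have hC' : ∀ ξ η Φ Ψ : C₀(X, ℂ), HasCompactSupport ⇑ξ → HasCompactSupport ⇑η →
        (∀ x, Φ x = ξ x * (θ x : ℂ)⁻¹) → (∀ x, Ψ x = (θ x : ℂ) * η x) →
        ‖(BK.Q Φ).comp (S.comp (BH.Q Ψ))‖ ≤ max C 0 * ‖ξ‖ * ‖η‖ := by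
      intro ξ η Φ Ψ h1 h2 h3 h4
      refine (hC ξ η Φ Ψ h1 h2 h3 h4).trans ?_
      exact mul_le_mul_of_nonneg_right
        (mul_le_mul_of_nonneg_right (le_max_left C 0) (norm_nonneg ξ)) (norm_nonneg η)
    have hclosed : IsClosed (B0r (H := H) (K := K) BH.mult) := isClosed_closure
    apply stmt2_mem_of_approx hclosed
    intro ε hε
    obtain ⟨ψ, hψc, hψ⟩ := stmt2_approx_by_cc BK hA
      (ε := ε / (‖S‖ + 1)) (by positivity)
    refine ⟨(BK.Q ψ).comp S,
      stmt2_core_right BH BK S θ hθ1 hθinf (le_max_right C 0) hC' ψ hψc, ?_⟩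
    calc ‖A.comp S - (BK.Q ψ).comp S‖ = ‖(A - BK.Q ψ).comp S‖ := by
          rw [ContinuousLinearMap.sub_comp]
      _ ≤ ‖A - BK.Q ψ‖ * ‖S‖ := ContinuousLinearMap.opNorm_comp_le _ _
      _ ≤ (ε / (‖S‖ + 1)) * ‖S‖ := mul_le_mul_of_nonneg_right hψ (norm_nonneg S)
      _ ≤ ε := by rw [mul_comm]; exact stmt2_mul_div_le (norm_nonneg S) hε

end
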